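/- Let π be an indecomposable 132-avoiding permutation and let λ = Λ(π) be the partition given by its Lehmer code (with the convention λ_i = 0 for indices beyond the number of parts). Then π avoids the pattern 4231 if and only if there do not exist indices i < j with λ_i ≥ λ_{i+1} + 2 and λ_j = λ_{j+1} > 0; equivalently, if λ_i ≥ λ_{i+1} + 2 for some i, then the positive parts of λ with index greater than i are strictly decreasing. -/

import Mathlib

/-- A permutation `π` of length `n` (as a bijection of `Fin n`, position `i` has value `π i`)
contains the pattern `p` of length `m` if some subsequence of `π` is order-isomorphic to `p`. -/
def Contains {n m : ℕ} (π : Equiv.Perm (Fin n)) (p : Equiv.Perm (Fin m)) : Prop :=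
  ∃ f : Fin m → Fin n, StrictMono f ∧ ∀ a b : Fin m, π (f a) < π (f b) ↔ p a < p b

/-- `π` avoids the pattern `p`. -/
def Avoids {n m : ℕ} (π : Equiv.Perm (Fin n)) (p : Equiv.Perm (Fin m)) : Prop :=
  ¬ Contains π p

/-- The number of inversions of `π`: pairs of positions `i < j` with `π i > π j`. -/
noncomputable def invCount {n : ℕ} (π : Equiv.Perm (Fin n)) : ℕ :=
  Nat.card {ij : Fin n × Fin n // ij.1 < ij.2 ∧ π ij.2 < π ij.1}

/-- The pattern 132. -/
def p132 : Equiv.Perm (Fin 3) := ⟨![0,2,1], ![0,2,1], by decide, by decide⟩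

/-- `π` is indecomposable: it is not the direct sum of two nonempty permutations,
i.e. there is no `0 < d < n` such that the first `d` positions carry the values `0, …, d-1`. -/
def Indecomposable {n : ℕ} (π : Equiv.Perm (Fin n)) : Prop :=
  ¬ ∃ d : ℕ, 0 < d ∧ d < n ∧ ∀ i : Fin n, (i : ℕ) < d → (π i : ℕ) < d

/-- The Lehmer code of `π` at position `i`: the number of positions `j > i` with
`π j < π i`.  For an indecomposable `132`-avoiding permutation the Lehmer code is
weakly decreasing and its nonzero entries form the partition `Λ(π)` of `inv(π)`. -/
noncomputable def lehmer {n : ℕ} (π : Equiv.Perm (Fin n)) (i : Fin n) : ℕ :=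
  Nat.card {j : Fin n // i < j ∧ π j < π i}

/-- The Lehmer code of `π`, extended by zeroes beyond position `n`; for an indecomposable
`132`-avoider this is exactly the partition `λ = Λ(π)` with the convention `λ_i = 0` for
indices `i` beyond the number of parts (indices are 0-based here). -/
noncomputable def lehmerExt {n : ℕ} (π : Equiv.Perm (Fin n)) (i : ℕ) : ℕ :=
  if h : i < n then lehmer π ⟨i, h⟩ else 0

def p4231 : Equiv.Perm (Fin 4) := ⟨![3,1,2,0], ![3,1,2,0], by decide, by decide⟩

namespace AuxL
open Finset

variable {n : ℕ} (π : Equiv.Perm (Fin n))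

def S (i : Fin n) : Finset (Fin n) := Finset.univ.filter (fun j => i < j ∧ π j < π i)

lemma mem_S {i u : Fin n} : u ∈ S π i ↔ i < u ∧ π u < π i := by
  simp [S]

lemma lehmer_eq (i : Fin n) : lehmer π i = (S π i).card := by
  rw [lehmer, Nat.card_eq_fintype_card, Fintype.card_subtype]
  rfl

lemma lehmerExt_eq {k : ℕ} (h : k < n) : lehmerExt π k = (S π ⟨k, h⟩).card := by
  rw [lehmerExt, dif_pos h, lehmer_eq]

lemma lehmerExt_pos_lt {k : ℕ} (h : 0 < lehmerExt π k) : k < n := by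
  by_contra h'
  rw [lehmerExt, dif_neg h'] at h
  exact absurd h (lt_irrefl 0)

lemma l132 (h132 : Avoids π p132) {x y z : Fin n} (hxy : x < y) (hyz : y < z)
    (h1 : π x < π z) (h2 : π z < π y) : False := by
  apply h132
  refine ⟨![x, y, z], ?_, ?_⟩
  · intro a b hab
    fin_cases a <;> fin_cases b <;>
      simp_all <;>
      first
        | exact hxy.trans hyz
        | exact absurd hab (by decide)
  · intro a b
    have hxy' : π x < π y := h1.trans h2
    fin_cases a <;> fin_cases b <;>
      simp [p132] <;>
      first
        | exact hxy'
        | exact h1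
        | exact h2
        | exact hxy'.le
        | exact h1.le
        | exact h2.le

lemma lcontains {x y z w : Fin n} (hxy : x < y) (hyz : y < z) (hzw : z < w)
    (h1 : π w < π y) (h2 : π y < π z) (h3 : π z < π x) : Contains π p4231 := by
  refine ⟨![x, y, z, w], ?_, ?_⟩
  · intro a b hab
    fin_cases a <;> fin_cases b <;>
      simp_all <;>
      first
        | exact hxy.trans hyz
        | exact hyz.trans hzw
        | exact (hxy.trans hyz).trans hzw
        | exact absurd hab (by decide)
  · intro a b
    have hyx : π y < π x := h2.trans h3
    have hwz : π w < π z := h1.trans h2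
    have hwx : π w < π x := hwz.trans h3
    fin_cases a <;> fin_cases b <;>
      simp [p4231] <;>
      first
        | exact h1 | exact h2 | exact h3 | exact hyx | exact hwz | exact hwx
        | exact h1.le | exact h2.le | exact h3.le
        | exact hyx.le | exact hwz.le | exact hwx.le


lemma mono (h132 : Avoids π p132) {x y : Fin n} (hxy : x ≤ y) :
    (S π y).card ≤ (S π x).card := by
  rcases eq_or_lt_of_le hxy with rfl | hlt
  · exact le_refl _
  apply Finset.card_le_card
  intro u hu
  rw [mem_S] at hu ⊢
  obtain ⟨h1, h2⟩ := hu
  refine ⟨hlt.trans h1, ?_⟩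
  by_contra hcon
  push_neg at hcon
  have hne : π x ≠ π u := fun h => (hlt.trans h1).ne (π.injective h)
  have hxu : π x < π u := lt_of_le_of_ne hcon hne
  rcases lt_or_ge (π x) (π y) with hxy' | hyx'
  · exact l132 π h132 hlt h1 hxu h2
  · exact absurd (h2.trans_le hyx') (fun h => hxu.asymm h)

lemma ascent_eq (h132 : Avoids π p132) {x y : Fin n} (hadj : (x:ℕ) + 1 = (y:ℕ))
    (ha : π x < π y) : (S π x).card = (S π y).card := by
  have hxy : x < y := by rw [Fin.lt_def]; omega
  apply le_antisymm
  · apply Finset.card_le_card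
    intro u hu
    rw [mem_S] at hu ⊢
    obtain ⟨h1, h2⟩ := hu
    have hne : u ≠ y := fun h => (h2.trans ha).ne (by rw [h])
    constructor
    · rw [Fin.lt_def] at h1 ⊢
      have : (u:ℕ) ≠ (y:ℕ) := fun h => hne (Fin.ext h)
      omega
    · exact h2.trans ha
  · apply Finset.card_le_card
    intro u hu
    rw [mem_S] at hu ⊢
    obtain ⟨h1, h2⟩ := hu
    refine ⟨hxy.trans h1, ?_⟩
    by_contra hcon
    push_neg at hcon
    have hne : π x ≠ π u := fun h => (hxy.trans h1).ne (π.injective h)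
    exact l132 π h132 hxy h1 (lt_of_le_of_ne hcon hne) h2

lemma descent_lt {x y : Fin n} (hadj : (x:ℕ) + 1 = (y:ℕ))
    (hd : π y < π x) : (S π y).card < (S π x).card := by
  have hxy : x < y := by rw [Fin.lt_def]; omega
  have hy : y ∉ S π y := by simp [mem_S]
  have hsub : insert y (S π y) ⊆ S π x := by
    intro u hu
    rcases Finset.mem_insert.mp hu with rfl | hu
    · exact (mem_S π).mpr ⟨hxy, hd⟩
    · rw [mem_S] at hu ⊢
      exact ⟨hxy.trans hu.1, hu.2.trans hd⟩
  have := Finset.card_le_card hsub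
  rw [Finset.card_insert_of_notMem hy] at this
  omega

lemma exists_between {x y : Fin n} (hadj : (x:ℕ) + 1 = (y:ℕ))
    (hdrop : (S π y).card + 2 ≤ (S π x).card) :
    ∃ w : Fin n, y < w ∧ π y < π w ∧ π w < π x := by
  have hxy : x < y := by rw [Fin.lt_def]; omega
  by_contra hno
  push_neg at hno
  have hsub : S π x ⊆ insert y (S π y) := by
    intro u hu
    rw [mem_S] at hu
    obtain ⟨h1, h2⟩ := hu
    rcases eq_or_ne u y with rfl | hne
    · exact Finset.mem_insert_self _ _
    · apply Finset.mem_insert_of_mem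
      rw [mem_S]
      have huy : y < u := by
        rw [Fin.lt_def] at h1 ⊢
        have : (u:ℕ) ≠ (y:ℕ) := fun h => hne (Fin.ext h)
        omega
      refine ⟨huy, ?_⟩
      by_contra hcon
      push_neg at hcon
      have hne2 : π y ≠ π u := fun h => huy.ne (π.injective h)
      exact absurd h2 (not_lt.mpr (hno u huy (lt_of_le_of_ne hcon hne2)))
  have := Finset.card_le_card hsub
  have := Finset.card_insert_le y (S π y)
  omega


lemma dir2 (h132 : Avoids π p132) (hc : Contains π p4231) :
    ∃ i j : ℕ, i < j ∧ lehmerExt π (i+1) + 2 ≤ lehmerExt π i ∧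
      lehmerExt π j = lehmerExt π (j+1) ∧ 0 < lehmerExt π j := by
  obtain ⟨f, hmono, hiff⟩ := hc
  have hab : f 0 < f 1 := hmono (by decide)
  have hbc : f 1 < f 2 := hmono (by decide)
  have hcd : f 2 < f 3 := hmono (by decide)
  have hvca : π (f 2) < π (f 0) := (hiff 2 0).mpr (by decide)
  have hvbc : π (f 1) < π (f 2) := (hiff 1 2).mpr (by decide)
  have hvdb : π (f 3) < π (f 1) := (hiff 3 1).mpr (by decide)
  -- the position i : last position in [f 0, f 1) with value above π (f 2)
  set T : Finset (Fin n) :=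
    Finset.univ.filter (fun u => f 0 ≤ u ∧ u < f 1 ∧ π (f 2) < π u) with hT
  have hTne : T.Nonempty := ⟨f 0, by simp [hT, hab, hvca]⟩
  set i : Fin n := T.max' hTne with hi
  have hiT : i ∈ T := T.max'_mem hTne
  have hi0 : f 0 ≤ i := by
    have := Finset.mem_filter.mp hiT; exact this.2.1
  have hib : i < f 1 := (Finset.mem_filter.mp hiT).2.2.1
  have hvi : π (f 2) < π i := (Finset.mem_filter.mp hiT).2.2.2
  have hi1n : (i:ℕ) + 1 < n := by
    have h1 := Fin.lt_def.mp hib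
    have h2 := (f 1).isLt
    omega
  set i1 : Fin n := ⟨(i:ℕ)+1, hi1n⟩ with hi1
  have hii1 : i < i1 := by rw [Fin.lt_def]; simp [hi1]
  have hi1b : i1 ≤ f 1 := by
    rw [Fin.le_def]
    have := Fin.lt_def.mp hib
    simp [hi1]; omega
  have hvi1 : π i1 < π (f 2) := by
    rcases eq_or_lt_of_le hi1b with heq | hlt
    · rw [heq]; exact hvbc
    · by_contra hcon
      push_neg at hcon
      have hne : π (f 2) ≠ π i1 := fun h => (hlt.trans hbc).ne' (π.injective h)
      have hmem : i1 ∈ T := by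
        simp only [hT, Finset.mem_filter, Finset.mem_univ, true_and]
        exact ⟨hi0.trans hii1.le, hlt, lt_of_le_of_ne hcon hne⟩
      have := Finset.le_max' T i1 hmem
      rw [← hi] at this
      exact absurd hii1 (not_lt.mpr this)
  -- the drop of size 2 at i
  have hdrop : (S π i1).card + 2 ≤ (S π i).card := by
    have hne1 : f 2 ∉ S π i1 := by
      rw [mem_S]
      rintro ⟨-, h⟩
      exact hvi1.asymm h
    have hi1c : i1 < f 2 := lt_of_le_of_lt hi1b hbc
    have hne2 : i1 ∉ insert (f 2) (S π i1) := by
      rw [Finset.mem_insert, mem_S]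
      rintro (h | ⟨h, -⟩)
      · exact hi1c.ne h
      · exact lt_irrefl _ h
    have hsub : insert i1 (insert (f 2) (S π i1)) ⊆ S π i := by
      intro u hu
      rcases Finset.mem_insert.mp hu with rfl | hu
      · exact (mem_S π).mpr ⟨hii1, hvi1.trans hvi⟩
      rcases Finset.mem_insert.mp hu with rfl | hu
      · exact (mem_S π).mpr ⟨hib.trans hbc, hvi⟩
      · rw [mem_S] at hu ⊢
        exact ⟨hii1.trans hu.1, hu.2.trans (hvi1.trans hvi)⟩
    have := Finset.card_le_card hsub
    rw [Finset.card_insert_of_notMem hne2, Finset.card_insert_of_notMem hne1] at this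
    omega
  -- the position j : argmin of π on [f 1, f 2]
  set T' : Finset (Fin n) :=
    Finset.univ.filter (fun u => f 1 ≤ u ∧ u ≤ f 2) with hT'
  have hT'ne : T'.Nonempty := ⟨f 1, by simp [hT', hbc.le]⟩
  obtain ⟨j, hjT, hjmin⟩ := T'.exists_min_image (fun u => π u) hT'ne
  have hjb : f 1 ≤ j := (Finset.mem_filter.mp hjT).2.1
  have hjc : j ≤ f 2 := (Finset.mem_filter.mp hjT).2.2
  have hvjb : π j ≤ π (f 1) := hjmin (f 1) (by simp [hT', hbc.le])
  have hjltc : j < f 2 := by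
    rcases eq_or_lt_of_le hjc with rfl | h
    · exact absurd (hvjb.trans_lt hvbc) (lt_irrefl _)
    · exact h
  have hj1n : (j:ℕ) + 1 < n := by
    have h1 := Fin.lt_def.mp hjltc
    have h2 := (f 2).isLt
    omega
  set j1 : Fin n := ⟨(j:ℕ)+1, hj1n⟩ with hj1
  have hjj1 : j < j1 := by rw [Fin.lt_def]; simp [hj1]
  have hj1c : j1 ≤ f 2 := by
    rw [Fin.le_def]
    have := Fin.lt_def.mp hjltc
    simp [hj1]; omega
  have hj1T' : j1 ∈ T' := by
    simp only [hT', Finset.mem_filter, Finset.mem_univ, true_and]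
    exact ⟨hjb.trans hjj1.le, hj1c⟩
  have hasc : π j < π j1 :=
    lt_of_le_of_ne (hjmin j1 hj1T') (fun h => hjj1.ne (π.injective h))
  -- the plateau at j
  have hadjj : (j:ℕ) + 1 = (j1:ℕ) := by simp [hj1]
  have heq : (S π j).card = (S π j1).card := by
    apply le_antisymm
    · apply Finset.card_le_card
      intro u hu
      rw [mem_S] at hu ⊢
      obtain ⟨h1, h2⟩ := hu
      have hne : u ≠ j1 := fun h => (h2.trans hasc).ne (by rw [h])
      constructor
      · rw [Fin.lt_def] at h1 ⊢
        have : (u:ℕ) ≠ (j1:ℕ) := fun h => hne (Fin.ext h)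
        omega
      · exact h2.trans hasc
    · apply Finset.card_le_card
      intro u hu
      rw [mem_S] at hu ⊢
      obtain ⟨h1, h2⟩ := hu
      refine ⟨hjj1.trans h1, ?_⟩
      by_contra hcon
      push_neg at hcon
      have hne : π j ≠ π u := fun h => (hjj1.trans h1).ne (π.injective h)
      exact l132 π h132 hjj1 h1 (lt_of_le_of_ne hcon hne) h2
  have hpos : 0 < (S π j).card := by
    apply Finset.card_pos.mpr
    refine ⟨f 3, (mem_S π).mpr ⟨hjltc.trans hcd, ?_⟩⟩
    by_contra hcon
    push_neg at hcon
    have hne : π j ≠ π (f 3) := fun h => (hjltc.trans hcd).ne (π.injective h)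
    exact l132 π h132 hjltc hcd (lt_of_le_of_ne hcon hne) (hvdb.trans hvbc)
  refine ⟨(i:ℕ), (j:ℕ), ?_, ?_, ?_, ?_⟩
  · have h1 := Fin.lt_def.mp hib
    have h2 := Fin.le_def.mp hjb
    omega
  · rw [lehmerExt_eq π hi1n, lehmerExt_eq π i.isLt]
    simpa using hdrop
  · rw [lehmerExt_eq π hj1n, lehmerExt_eq π j.isLt]
    simpa using heq
  · rw [lehmerExt_eq π j.isLt]
    simpa using hpos


lemma dir1 (h132 : Avoids π p132)
    (hex : ∃ i j : ℕ, i < j ∧ lehmerExt π (i+1) + 2 ≤ lehmerExt π i ∧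
      lehmerExt π j = lehmerExt π (j+1) ∧ 0 < lehmerExt π j) :
    Contains π p4231 := by
  classical
  obtain ⟨i, j0, hij0, hdrop', hrest'⟩ := hex
  have hexj : ∃ j, i < j ∧ lehmerExt π j = lehmerExt π (j+1) ∧ 0 < lehmerExt π j :=
    ⟨j0, hij0, hrest'⟩
  set j := Nat.find hexj with hjdef
  obtain ⟨hij, hplateq, hposE⟩ := Nat.find_spec hexj
  have hmin : ∀ k, k < j →
      ¬(i < k ∧ lehmerExt π k = lehmerExt π (k+1) ∧ 0 < lehmerExt π k) :=
    fun k hk => Nat.find_min hexj hk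
  have hjn : j < n := lehmerExt_pos_lt π hposE
  have hpos1E : 0 < lehmerExt π (j+1) := by rw [← hplateq]; exact hposE
  have hj1n : j + 1 < n := lehmerExt_pos_lt π hpos1E
  have hi1n : i + 1 < n := by omega
  have hin : i < n := by omega
  set I : Fin n := ⟨i, hin⟩ with hIdef
  set I1 : Fin n := ⟨i+1, hi1n⟩ with hI1def
  set J : Fin n := ⟨j, hjn⟩ with hJdef
  set J1 : Fin n := ⟨j+1, hj1n⟩ with hJ1def
  have hadjI : (I:ℕ) + 1 = (I1:ℕ) := rfl
  have hadjJ : (J:ℕ) + 1 = (J1:ℕ) := rfl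
  have hdrop : (S π I1).card + 2 ≤ (S π I).card := by
    rw [lehmerExt_eq π hi1n, lehmerExt_eq π hin] at hdrop'
    exact hdrop'
  have hpl : (S π J).card = (S π J1).card := by
    rw [lehmerExt_eq π hjn, lehmerExt_eq π hj1n] at hplateq
    exact hplateq
  have hpos : 0 < (S π J).card := by
    rw [lehmerExt_eq π hjn] at hposE
    exact hposE
  have hIJ : I < J := by exact hij
  have hJJ1 : J < J1 := by rw [Fin.lt_def]; exact Nat.lt_succ_self _
  have hII1 : I < I1 := by rw [Fin.lt_def]; exact Nat.lt_succ_self _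
  have hIJ1 : I < J1 := hIJ.trans hJJ1
  have hJasc : π J < π J1 := by
    by_contra hcon
    push_neg at hcon
    have hne : π J1 ≠ π J := fun h => hJJ1.ne' (π.injective h)
    have hd := descent_lt π hadjJ (lt_of_le_of_ne hcon hne)
    omega
  obtain ⟨d, hdm⟩ := Finset.card_pos.mp hpos
  rw [mem_S] at hdm
  obtain ⟨hJd, hvd⟩ := hdm
  have hvdJ1 : π d < π J1 := hvd.trans hJasc
  have hJ1d : J1 < d := by
    have hne : d ≠ J1 := fun h => hvdJ1.ne (by rw [h])
    have h1 : (j:ℕ) < (d:ℕ) := Fin.lt_def.mp hJd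
    have h2 : (d:ℕ) ≠ j+1 := fun h => hne (Fin.ext h)
    rw [Fin.lt_def]
    simp only [hJ1def]
    omega
  rcases lt_or_gt_of_ne (show π I ≠ π J1 from fun h => hIJ1.ne (π.injective h)) with hB | hA
  · -- case B : π I < π J1, impossible by minimality of j
    exfalso
    have hIdesc : π I1 < π I := by
      by_contra hcon
      push_neg at hcon
      have hne : π I ≠ π I1 := fun h => hII1.ne (π.injective h)
      have := ascent_eq π h132 hadjI (lt_of_le_of_ne hcon hne)
      omega
    obtain ⟨w, hw1, hw2, hw3⟩ := exists_between π hadjI hdrop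
    have hnoasc : ∀ k, i+1 ≤ k → k < j → ∀ (h1 : k < n) (h2 : k+1 < n),
        π ⟨k+1, h2⟩ < π ⟨k, h1⟩ := by
      intro k hk1 hk2 h1 h2
      by_contra hcon
      push_neg at hcon
      have hltk : (⟨k, h1⟩ : Fin n) < ⟨k+1, h2⟩ := by rw [Fin.lt_def]; simp
      have hne : π (⟨k, h1⟩ : Fin n) ≠ π ⟨k+1, h2⟩ := fun h => hltk.ne (π.injective h)
      have hasck : π (⟨k, h1⟩ : Fin n) < π ⟨k+1, h2⟩ := lt_of_le_of_ne hcon hne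
      have heqc := ascent_eq π h132 (show ((⟨k, h1⟩ : Fin n) : ℕ) + 1 = ((⟨k+1, h2⟩ : Fin n) : ℕ) from rfl) hasck
      have hposk : 0 < (S π ⟨k, h1⟩).card := by
        refine lt_of_lt_of_le hpos (mono π h132 ?_)
        rw [Fin.le_def]
        simp only [hJdef]
        omega
      exact hmin k hk2 ⟨by omega,
        by rw [lehmerExt_eq π h1, lehmerExt_eq π h2]; exact heqc,
        by rw [lehmerExt_eq π h1]; exact hposk⟩
    have hchain : ∀ k (h1 : k < n), i+1 ≤ k → k ≤ j → π ⟨k, h1⟩ ≤ π I1 := by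
      intro k
      induction k with
      | zero => intro h1 hk1 hk2; omega
      | succ m ih =>
        intro h1 hk1 hk2
        rcases Nat.lt_or_ge (i+1) (m+1) with hlt | hge
        · have hmn : m < n := by omega
          have hstep := hnoasc m (by omega) (by omega) hmn h1
          exact le_trans hstep.le (ih hmn (by omega) (by omega))
        · have hmi : m + 1 = i + 1 := by omega
          have : (⟨m+1, h1⟩ : Fin n) = I1 := Fin.ext (by simp [hI1def, hmi])
          rw [this]
    have hwJ : J < w := by
      by_contra hcon
      push_neg at hcon
      have h1 : (w:ℕ) ≤ j := by
        have := Fin.le_def.mp hcon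
        simpa [hJdef] using this
      have h2 : i + 1 < (w:ℕ) := by
        have := Fin.lt_def.mp hw1
        simpa [hI1def] using this
      have := hchain (w:ℕ) w.isLt (by omega) h1
      rw [Fin.eta] at this
      exact absurd hw2 (not_lt.mpr this)
    have hwJ1 : J1 < w := by
      have hne : w ≠ J1 := fun h => (hw3.trans hB).ne (by rw [h])
      have h1 : (j:ℕ) < (w:ℕ) := by
        have := Fin.lt_def.mp hwJ
        simpa [hJdef] using this
      have h2 : (w:ℕ) ≠ j+1 := fun h => hne (Fin.ext h)
      rw [Fin.lt_def]
      simp only [hJ1def]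
      omega
    have hJI1 : π J ≤ π I1 := by
      have := hchain j hjn (by omega) (le_refl j)
      exact this
    exact l132 π h132 hJJ1 hwJ1 (lt_of_le_of_lt hJI1 hw2) (hw3.trans hB)
  · -- case A : π J1 < π I gives the occurrence (I, J, J1, d)
    exact lcontains π hIJ hJJ1 hJ1d hvd hJasc hA

end AuxL

/-- Let `π` be an indecomposable 132-avoiding permutation and `λ = Λ(π)` the partition
given by its Lehmer code (here `lehmerExt π`, with `λ_i = 0` beyond the parts).  Then `π`
avoids 4231 if and only if there are no indices `i < j` with `λ_i ≥ λ_{i+1} + 2` and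
`λ_j = λ_{j+1} > 0` (equivalently: after any gap of size at least two, the positive parts
are strictly decreasing). -/
theorem avoids_4231_iff (n : ℕ) (π : Equiv.Perm (Fin n))
    (hind : Indecomposable π) (h132 : Avoids π p132) :
    Avoids π p4231 ↔
      ¬ ∃ i j : ℕ, i < j ∧ lehmerExt π (i + 1) + 2 ≤ lehmerExt π i ∧
        lehmerExt π j = lehmerExt π (j + 1) ∧ 0 < lehmerExt π j := by
  constructor
  · intro hav hexE
    exact hav (AuxL.dir1 π h132 hexE)
  · intro hne hc
    exact hne (AuxL.dir2 π h132 hc)
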